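/- There exists a real number d₀ such that for every real d ≥ d₀ and every real λ with 0 < λ ≤ d/(4 ln d), the function g(x) = 1/(1 + λ(1 + λx²)^{−d}) maps the interval [1/(1+λ), 1] into itself, has a unique fixed point a* in [1/(1+λ), 1], and for every starting point x₀ ∈ [1/(1+λ), 1] the sequence of iterates defined by a₀ = x₀, aₙ = g(aₙ₋₁) converges to a*. -/

import Mathlib

open Real Filter

set_option maxHeartbeats 1000000


-- log d ≥ 30 for d ≥ 1e16
lemma aux_log_ge {d : ℝ} (hd : (10:ℝ)^16 ≤ d) : 30 ≤ Real.log d := by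
  rw [Real.le_log_iff_exp_le (by linarith [pow_pos (show (0:ℝ)<10 by norm_num) 16])]
  have h : Real.exp 30 = Real.exp 1 ^ (30:ℕ) := by
    rw [← Real.exp_nat_mul]; norm_num
  have h2 : Real.exp 1 ^ (30:ℕ) ≤ 2.7182818286 ^ (30:ℕ) :=
    pow_le_pow_left₀ (Real.exp_pos 1).le Real.exp_one_lt_d9.le 30
  have h3 : (2.7182818286:ℝ) ^ (30:ℕ) ≤ (10:ℝ)^16 := by norm_num
  linarith [h.le, h.ge]

-- log d ≤ 4 √√d for d ≥ 1
lemma aux_log_le {d : ℝ} (hd : (1:ℝ) ≤ d) : Real.log d ≤ 4 * Real.sqrt (Real.sqrt d) := by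
  have h0 : (0:ℝ) < Real.sqrt d := Real.sqrt_pos.2 (by linarith)
  have h1 : (0:ℝ) < Real.sqrt (Real.sqrt d) := Real.sqrt_pos.2 h0
  have h2 : Real.log d = 4 * Real.log (Real.sqrt (Real.sqrt d)) := by
    rw [Real.log_sqrt (Real.sqrt_nonneg d), Real.log_sqrt (by linarith : (0:ℝ) ≤ d)]; ring
  have h3 := Real.log_le_sub_one_of_pos h1
  linarith

lemma aux_log_five_fourth : (1/5 : ℝ) ≤ Real.log (5/4) := by
  rw [Real.le_log_iff_exp_le (by norm_num)]
  have h : Real.exp (1/5) ^ (5:ℕ) = Real.exp 1 := by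
    rw [← Real.exp_nat_mul]; norm_num
  have h2 : Real.exp 1 < (5/4:ℝ)^(5:ℕ) := by
    calc Real.exp 1 < 2.7182818286 := Real.exp_one_lt_d9
    _ ≤ (5/4:ℝ)^(5:ℕ) := by norm_num
  have := lt_of_pow_lt_pow_left₀ 5 (by norm_num : (0:ℝ) ≤ 5/4) (h ▸ h2 : Real.exp (1/5) ^ (5:ℕ) < (5/4:ℝ)^(5:ℕ))
  linarith


lemma aux_log80 : Real.log 80 ≤ 5 := by
  rw [Real.log_le_iff_le_exp (by norm_num)]
  have h : Real.exp 5 = Real.exp 1 ^ (5:ℕ) := by rw [← Real.exp_nat_mul]; norm_num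
  have h2 : (2.7182818283:ℝ) ^ (5:ℕ) ≤ Real.exp 1 ^ (5:ℕ) :=
    pow_le_pow_left₀ (by norm_num) Real.exp_one_gt_d9.le 5
  have : (80:ℝ) ≤ (2.7182818283:ℝ) ^ (5:ℕ) := by norm_num
  linarith [h.le, h.ge]

lemma aux_log4 : Real.log 4 ≤ 2 := by
  rw [Real.log_le_iff_le_exp (by norm_num)]
  have h : Real.exp 2 = Real.exp 1 ^ (2:ℕ) := by rw [← Real.exp_nat_mul]; norm_num
  have h2 : (2.7182818283:ℝ) ^ (2:ℕ) ≤ Real.exp 1 ^ (2:ℕ) :=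
    pow_le_pow_left₀ (by norm_num) Real.exp_one_gt_d9.le 2
  have : (4:ℝ) ≤ (2.7182818283:ℝ) ^ (2:ℕ) := by norm_num
  linarith [h.le, h.ge]

-- log(1+t) ≥ t/(1+t)
lemma aux_log_lb {t : ℝ} (ht : 0 ≤ t) : t / (1 + t) ≤ Real.log (1 + t) := by
  have h1 : (0:ℝ) < 1 + t := by linarith
  have h2 := Real.log_le_sub_one_of_pos (show (0:ℝ) < (1+t)⁻¹ by positivity)
  rw [Real.log_inv] at h2
  have : (1+t)⁻¹ - 1 = -(t/(1+t)) := by field_simp; ring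
  rw [this] at h2
  linarith




-- tiny polynomial lemmas (kept separate so nlinarith sees a small context)
lemma poly1 {a y : ℝ} (ha : 0 ≤ a) (h : a ≤ y) : a*y ≤ y^2 := by nlinarith
lemma poly2 {t : ℝ} (h0 : 0 ≤ t) (h1 : t ≤ 1/4) : (4/5)*t ≤ t/(1+t) := by
  rw [le_div_iff₀ (by linarith)]; nlinarith
lemma poly3 {d l : ℝ} (hd : 0 < d) (h : 1 < 4*d*l^2) : d ≤ (2*(d*l))^2 := by
  nlinarith [mul_lt_mul_of_pos_left h hd]
lemma poly4 {d l : ℝ} (hl : 0 < l) (hl1 : l ≤ 1) (hdl : 50000000 ≤ d*l) :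
    (1+l)^2 ≤ (8/5)*(d*l) := by nlinarith [mul_nonneg hl.le (sub_nonneg.2 hl1)]
lemma poly5 {d l : ℝ} (hl1 : 1 < l) (h120 : 120*l ≤ d) : (1+l)^2 ≤ (8/5)*(d*l) := by
  nlinarith [mul_nonneg (by linarith : (0:ℝ) ≤ l-1) (by linarith : (0:ℝ) ≤ 3*l+1),
             mul_nonneg (by linarith : (0:ℝ) ≤ l) (by linarith : (0:ℝ) ≤ d - 120*l)]
lemma poly6 {x c : ℝ} : 2*c*(x-c) ≤ x^2 - c^2 := by nlinarith [sq_nonneg (x-c)]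
lemma poly7 {l : ℝ} (hl : 0 < l) (h : l ≤ 20) : l^2 ≤ 20*(1+l) := by nlinarith
lemma poly8 {l : ℝ} (hl : 0 < l) (h : l ≤ 20) : (1+l)^2 ≤ 441 := by nlinarith
lemma poly9 {l : ℝ} (h : 20 ≤ l) : (1+l)^2 * 400 ≤ 441 * l^2 := by
  nlinarith [mul_nonneg (by linarith : (0:ℝ) ≤ l-20) (by linarith : (0:ℝ) ≤ 41*l+20)]

lemma aux_key {d l x : ℝ} (hd : (10:ℝ)^16 ≤ d) (hl : 0 < l)
    (hld : l ≤ d / (4 * Real.log d)) (hxc : 1/(1+l) ≤ x) (hx1 : x ≤ 1) :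
    4*d*l^2*x ≤ (1 + l*x^2) ^ (d:ℝ) := by
  have hd16 : (10:ℝ)^16 = 10000000000000000 := by norm_num
  rw [hd16] at hd
  have hd0 : (0:ℝ) < d := by linarith
  have hd1 : (1:ℝ) ≤ d := by linarith
  have hlog : 30 ≤ Real.log d := aux_log_ge (by rw [hd16]; exact hd)
  have hp : (0:ℝ) < 1 + l := by linarith
  have hx0 : 0 < x := lt_of_lt_of_le (by positivity) hxc
  have hb1 : (1:ℝ) ≤ 1 + l*x^2 := le_add_of_nonneg_right (by positivity)
  have hb0 : (0:ℝ) < 1 + l*x^2 := by linarith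
  have hld' : l * (4 * Real.log d) ≤ d := by
    rw [div_eq_mul_inv] at hld
    have h4 : (0:ℝ) < 4 * Real.log d := by linarith
    calc l * (4*Real.log d) ≤ (d * (4*Real.log d)⁻¹) * (4*Real.log d) := by
          apply mul_le_mul_of_nonneg_right hld h4.le
      _ = d := by field_simp
  have hledd : l ≤ d := by
    have := mul_le_mul_of_nonneg_left (show (1:ℝ) ≤ 4*Real.log d by linarith) hl.le
    linarith
  by_cases hA : 4*d*l^2 ≤ 1
  · have h0 : (0:ℝ) ≤ 4*d*l^2 := by positivity
    calc 4*d*l^2*x ≤ 4*d*l^2*1 := mul_le_mul_of_nonneg_left hx1 h0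
      _ ≤ 1 := by linarith
      _ ≤ (1 + l*x^2) ^ (d:ℝ) := Real.one_le_rpow hb1 hd0.le
  push_neg at hA
  rw [← Real.log_le_log_iff (by positivity) (Real.rpow_pos_of_pos hb0 d),
      Real.log_rpow hb0]
  have hlhs : Real.log (4*d*l^2*x) = Real.log 4 + Real.log d + 2*Real.log l + Real.log x := by
    rw [Real.log_mul (by positivity) (ne_of_gt hx0),
        Real.log_mul (by positivity) (by positivity),
        Real.log_mul (by norm_num) (ne_of_gt hd0), Real.log_pow]
    push_cast; ring
  rw [hlhs]
  have hlogl : Real.log l ≤ Real.log d := Real.log_le_log hl hledd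
  have hlogx : Real.log x ≤ 0 := Real.log_nonpos hx0.le hx1
  set y := Real.sqrt (Real.sqrt d) with hy
  have hsd0 : (0:ℝ) ≤ Real.sqrt d := Real.sqrt_nonneg d
  have hy0 : (0:ℝ) ≤ y := Real.sqrt_nonneg _
  have hy2 : y^2 = Real.sqrt d := Real.sq_sqrt hsd0
  have hy4 : (y^2)^2 = d := by rw [hy2]; exact Real.sq_sqrt hd0.le
  have hylarge : (10000:ℝ) ≤ y := by
    rw [hy, Real.le_sqrt' (by norm_num), Real.le_sqrt (by norm_num) hd0.le]
    norm_num
    linarith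
  have hlogd_le : Real.log d ≤ 4*y := aux_log_le hd1
  have hy10k : (10000:ℝ)*y ≤ y^2 := poly1 (by norm_num) hylarge
  have hysq : (100000000:ℝ) ≤ y^2 := by linarith
  have hdbig : (1000000000000:ℝ)*y ≤ d := by
    have e1 : (100000000:ℝ)*y^2 ≤ y^2*y^2 := mul_le_mul_of_nonneg_right hysq (sq_nonneg y)
    have e2 : (100000000:ℝ)*(10000*y) ≤ 100000000*y^2 := by linarith
    linarith [hy4, e1, e2]
  by_cases hB1 : 1/4 ≤ l*x^2
  · have h54 : Real.log (5/4) ≤ Real.log (1 + l*x^2) := Real.log_le_log (by norm_num) (by linarith)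
    have hq : (d/5 : ℝ) ≤ d * Real.log (1 + l*x^2) := by
      have t1 := mul_le_mul_of_nonneg_left aux_log_five_fourth hd0.le
      have t2 := mul_le_mul_of_nonneg_left h54 hd0.le
      calc d/5 = d * (1/5) := by ring
        _ ≤ d * Real.log (5/4) := t1
        _ ≤ d * Real.log (1 + l*x^2) := t2
    have hnum : Real.log 4 + Real.log d + 2*Real.log l + Real.log x ≤ 2 + 3*Real.log d := by
      linarith [aux_log4]
    have : 2 + 3*Real.log d ≤ d/5 := by linarith
    linarith
  push_neg at hB1
  have hloglb : (4/5)*(l*x^2) ≤ Real.log (1 + l*x^2) := by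
    have h1 := aux_log_lb (show (0:ℝ) ≤ l*x^2 by positivity)
    have h2 := poly2 (show (0:ℝ) ≤ l*x^2 by positivity) hB1.le
    linarith
  have hrhs : (4/5)*d*(l*x^2) ≤ d * Real.log (1 + l*x^2) := by
    have := mul_le_mul_of_nonneg_left hloglb hd0.le
    linarith
  have hdl : y^2/2 ≤ d*l := by
    have h1 : d ≤ (2*(d*l))^2 := poly3 hd0 hA
    have h2 : Real.sqrt d ≤ Real.sqrt ((2*(d*l))^2) := Real.sqrt_le_sqrt h1
    rw [Real.sqrt_sq (by positivity)] at h2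
    linarith [hy2.ge, hy2.le]
  have hslope : (1+l)^2 ≤ (8/5)*(d*l) := by
    by_cases hl1 : l ≤ 1
    · exact poly4 hl hl1 (by linarith)
    · push_neg at hl1
      have h120 : 120*l ≤ d := by
        have := mul_le_mul_of_nonneg_left hlog hl.le
        linarith
      exact poly5 hl1 h120
  set c := 1/(1+l) with hc
  have hc0 : (0:ℝ) < c := by positivity
  have hcp : c * (1+l) = 1 := one_div_mul_cancel (ne_of_gt hp)
  have hcsq : c^2 * (1+l)^2 = 1 := by rw [← mul_pow, hcp]; norm_num
  have hdl0 : (0:ℝ) < d*l := mul_pos hd0 hl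
  have hstep : Real.log x - Real.log c ≤ (4/5)*(d*l)*(x^2 - c^2) := by
    have h1 : Real.log x - Real.log c = Real.log (x/c) := (Real.log_div (ne_of_gt hx0) (ne_of_gt hc0)).symm
    have h2 : Real.log (x/c) ≤ x/c - 1 := Real.log_le_sub_one_of_pos (by positivity)
    have hxc2 : c ≤ x := hxc
    have hsq : 2*c*(x - c) ≤ x^2 - c^2 := poly6
    have hc2 : (1:ℝ) ≤ (8/5)*(d*l)*c^2 := by
      have := mul_le_mul_of_nonneg_right hslope (sq_nonneg c)
      linarith
    have t1 := mul_le_mul_of_nonneg_right hc2 (sub_nonneg.2 hxc2)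
    have t2 := mul_le_mul_of_nonneg_left hsq (by positivity : (0:ℝ) ≤ (4/5)*(d*l))
    have t3 := mul_le_mul_of_nonneg_left t2 hc0.le
    have h4 : x - c ≤ c * ((4/5)*(d*l)*(x^2 - c^2)) := by linarith
    have h5 : x/c - 1 ≤ (4/5)*(d*l)*(x^2-c^2) := by
      rw [sub_le_iff_le_add, div_le_iff₀ hc0]
      linarith [h4]
    linarith
  have hlogc : Real.log c = -Real.log (1+l) := by
    rw [hc, one_div, Real.log_inv]
  have hbase : Real.log 4 + Real.log d + 2*Real.log l + Real.log c ≤ (4/5)*(d*l)*c^2 := by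
    rw [hlogc]
    by_cases hl20 : l ≤ 20
    · have h20 : 2*Real.log l - Real.log (1+l) ≤ Real.log 20 := by
        have e1 : 2*Real.log l - Real.log (1+l) = Real.log (l^2/(1+l)) := by
          rw [Real.log_div (by positivity) (ne_of_gt hp), Real.log_pow]; push_cast; ring
        rw [e1]
        apply Real.log_le_log (by positivity)
        rw [div_le_iff₀ hp]
        exact poly7 hl hl20
      have h80 : Real.log 4 + Real.log 20 = Real.log 80 := by
        rw [← Real.log_mul (by norm_num) (by norm_num)]; norm_num
      have h441 : (1+l)^2 ≤ 441 := poly8 hl hl20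
      have hcc : 1/441 ≤ c^2 := by
        have := mul_le_mul_of_nonneg_left h441 (sq_nonneg c)
        linarith
      have hlc2 : (4/5)*(y^2/2)*(1/441) ≤ (4/5)*(d*l)*c^2 := by
        have := mul_le_mul hdl hcc (by norm_num) hdl0.le
        linarith
      have h5d : 5 + Real.log d ≤ (4/5)*(y^2/2)*(1/441) := by
        linarith [hy10k]
      linarith [aux_log80]
    · push_neg at hl20
      have hll : Real.log l ≤ Real.log (1+l) := Real.log_le_log hl (by linarith)
      have h441 : (1+l)^2 * 400 ≤ 441 * l^2 := poly9 hl20.le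
      have hkey : (1280/441)*Real.log d ≤ (4/5)*(d*l)*c^2 := by
        have hc2 : c^2 = 1/(1+l)^2 := by rw [hc]; rw [one_div, one_div, ← inv_pow]
        rw [hc2, show (4/5)*(d*l)*(1/(1+l)^2) = ((4/5)*(d*l))/(1+l)^2 by ring,
            le_div_iff₀ (by positivity)]
        have A := mul_le_mul_of_nonneg_left h441 (show (0:ℝ) ≤ Real.log d by linarith)
        have B := mul_le_mul_of_nonneg_left hld' hl.le
        linarith
      have : Real.log 4 + Real.log d + Real.log l ≤ 2 + 2*Real.log d := by
        linarith [aux_log4]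
      linarith [hlog, hkey, hll]
  calc Real.log 4 + Real.log d + 2*Real.log l + Real.log x
      ≤ (4/5)*(d*l)*c^2 + (4/5)*(d*l)*(x^2 - c^2) := by linarith
    _ = (4/5)*d*(l*x^2) := by ring
    _ ≤ d * Real.log (1 + l*x^2) := hrhs




/-- There is a `d₀` such that for all `d ≥ d₀` and `0 < λ ≤ d / (4 ln d)`, the
function `g x = 1 / (1 + λ (1 + λ x²)^(−d))` maps `[1/(1+λ), 1]` into itself,
has a unique fixed point `a*` there, and iterates from any starting point in
the interval converge to `a*`. -/
theorem stmt3 :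
    ∃ d₀ : ℝ, ∀ d : ℝ, d₀ ≤ d → ∀ l : ℝ, 0 < l → l ≤ d / (4 * Real.log d) →
      ∀ g : ℝ → ℝ, (∀ x, g x = 1 / (1 + l * (1 + l * x ^ 2) ^ (-d))) →
        Set.MapsTo g (Set.Icc (1 / (1 + l)) 1) (Set.Icc (1 / (1 + l)) 1) ∧
        ∃ astar ∈ Set.Icc (1 / (1 + l)) (1 : ℝ),
          g astar = astar ∧
          (∀ a ∈ Set.Icc (1 / (1 + l)) (1 : ℝ), g a = a → a = astar) ∧
          ∀ x₀ ∈ Set.Icc (1 / (1 + l)) (1 : ℝ),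
            Filter.Tendsto (fun n : ℕ => g^[n] x₀) Filter.atTop (nhds astar) := by
  refine ⟨(10:ℝ)^16, fun d hd l hl hld g hg => ?_⟩
  have hd0 : (0:ℝ) < d := lt_of_lt_of_le (by positivity) hd
  have hp : (0:ℝ) < 1 + l := by linarith
  have hc1 : 1/(1+l) ≤ 1 := by rw [div_le_one hp]; linarith
  set s : Set ℝ := Set.Icc (1/(1+l)) 1 with hs
  have hbpos : ∀ x : ℝ, (0:ℝ) < 1 + l*x^2 := fun x => by positivity
  have hb1 : ∀ x : ℝ, (1:ℝ) ≤ 1 + l*x^2 := fun x => le_add_of_nonneg_right (by positivity)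
  have hrp : ∀ x : ℝ, (0:ℝ) < (1 + l*x^2) ^ (-d) := fun x => Real.rpow_pos_of_pos (hbpos x) _
  have hrle1 : ∀ x : ℝ, (1 + l*x^2) ^ (-d) ≤ 1 := fun x =>
    Real.rpow_le_one_of_one_le_of_nonpos (hb1 x) (by linarith)
  have hD1 : ∀ x : ℝ, (1:ℝ) ≤ 1 + l * (1 + l*x^2) ^ (-d) := fun x =>
    le_add_of_nonneg_right (le_of_lt (mul_pos hl (hrp x)))
  have hDle : ∀ x : ℝ, 1 + l * (1 + l*x^2) ^ (-d) ≤ 1 + l := fun x => by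
    have := mul_le_mul_of_nonneg_left (hrle1 x) hl.le
    linarith
  have hD0 : ∀ x : ℝ, (0:ℝ) < 1 + l * (1 + l*x^2) ^ (-d) := fun x => lt_of_lt_of_le one_pos (hD1 x)
  -- maps to
  have hmaps : Set.MapsTo g s s := by
    intro x hx
    rw [hs, Set.mem_Icc, hg x]
    constructor
    · exact one_div_le_one_div_of_le (hD0 x) (hDle x)
    · rw [div_le_one (hD0 x)]; exact hD1 x
  refine ⟨hmaps, ?_⟩
  -- the derivative
  set G' : ℝ → ℝ := fun x =>
    2*d*l^2*x*(1 + l*x^2)^(-d-1) / (1 + l*(1 + l*x^2)^(-d))^2 with hG'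
  have hgfun : g = fun x => (1 + l*(1 + l*x^2)^(-d))⁻¹ := funext fun x => by rw [hg x, one_div]
  have hderiv : ∀ x : ℝ, HasDerivAt g (G' x) x := by
    intro x
    have h1 : HasDerivAt (fun x : ℝ => 1 + l*x^2) (l*(2*x)) x := by
      have := ((hasDerivAt_pow 2 x).const_mul l).const_add 1
      simpa using this
    have h2 : HasDerivAt (fun x : ℝ => (1 + l*x^2)^(-d))
        (l*(2*x) * (-d) * (1 + l*x^2)^(-d-1)) x :=
      h1.rpow_const (Or.inl (ne_of_gt (hbpos x)))
    have h3 : HasDerivAt (fun x : ℝ => 1 + l*(1 + l*x^2)^(-d))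
        (l * (l*(2*x) * (-d) * (1 + l*x^2)^(-d-1))) x :=
      (h2.const_mul l).const_add 1
    have h4 := h3.inv (ne_of_gt (hD0 x))
    rw [hgfun]
    refine h4.congr_deriv ?_
    rw [hG']
    field_simp
  -- derivative bound
  have hbound : ∀ x ∈ s, ‖G' x‖ ≤ 1/2 := by
    intro x hx
    obtain ⟨hxc, hx1⟩ := hx
    have hx0 : 0 < x := lt_of_lt_of_le (by positivity) hxc
    have hnum0 : 0 ≤ 2*d*l^2*x*(1 + l*x^2)^(-d-1) := by positivity
    have hGnonneg : 0 ≤ G' x := by rw [hG']; positivity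
    rw [Real.norm_eq_abs, abs_of_nonneg hGnonneg, hG']
    have hDsq : (1:ℝ) ≤ (1 + l*(1 + l*x^2)^(-d))^2 := by
      have h := hD1 x
      nlinarith [h]
    have step1 : 2*d*l^2*x*(1 + l*x^2)^(-d-1) / (1 + l*(1 + l*x^2)^(-d))^2
        ≤ 2*d*l^2*x*(1 + l*x^2)^(-d-1) := div_le_self hnum0 hDsq
    have step2 : (1 + l*x^2)^(-d-1) ≤ (1 + l*x^2)^(-d) :=
      Real.rpow_le_rpow_of_exponent_le (hb1 x) (by linarith)
    have step3 : 2*d*l^2*x*(1 + l*x^2)^(-d-1) ≤ 2*d*l^2*x*(1 + l*x^2)^(-d) :=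
      mul_le_mul_of_nonneg_left step2 (by positivity)
    have hkey := aux_key hd hl hld hxc hx1
    have step4 : 2*d*l^2*x*(1 + l*x^2)^(-d) ≤ 1/2 := by
      rw [Real.rpow_neg (hbpos x).le, mul_comm (2*d*l^2*x), inv_mul_le_iff₀ (Real.rpow_pos_of_pos (hbpos x) d)]
      calc 2*d*l^2*x ≤ (1/2) * (4*d*l^2*x) := by ring_nf; linarith [hkey]
        _ ≤ (1/2) * ((1 + l*x^2) ^ (d:ℝ)) := by linarith [hkey, mul_le_mul_of_nonneg_left hkey (by norm_num : (0:ℝ) ≤ 1/2)]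
        _ = (1 + l*x^2) ^ (d:ℝ) * (1/2) := by ring
    linarith
  -- Lipschitz on s
  have hlip : LipschitzOnWith (1/2 : NNReal) g s := by
    apply (convex_Icc _ _).lipschitzOnWith_of_nnnorm_hasDerivWithin_le
      (f' := G') (fun x _ => (hderiv x).hasDerivWithinAt)
    intro x hx
    rw [← NNReal.coe_le_coe, coe_nnnorm]
    calc ‖G' x‖ ≤ 1/2 := hbound x hx
      _ = ((1/2 : NNReal) : ℝ) := by norm_num
  -- Banach fixed point on the subtype
  haveI : CompleteSpace s := (isClosed_Icc : IsClosed s).completeSpace_coe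
  haveI : Nonempty s := ⟨⟨1, hc1, le_refl 1⟩⟩
  set F : s → s := hmaps.restrict g s s with hF
  have hFcoe : ∀ q : s, (F q : ℝ) = g q := fun q => rfl
  have hFlip : LipschitzWith (1/2 : NNReal) F := by
    apply LipschitzWith.of_dist_le_mul
    intro q r
    rw [Subtype.dist_eq, hFcoe, hFcoe]
    exact hlip.dist_le_mul q.1 q.2 r.1 r.2
  have hcontr : ContractingWith (1/2 : NNReal) F := ⟨by rw [← NNReal.coe_lt_coe]; norm_num, hFlip⟩
  set p : s := ContractingWith.fixedPoint F hcontr with hpdef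
  have hpfix : Function.IsFixedPt F p := ContractingWith.fixedPoint_isFixedPt hcontr
  have hiter : ∀ (n : ℕ) (q : s), ((F^[n] q : s) : ℝ) = g^[n] (q : ℝ) := by
    intro n
    induction n with
    | zero => intro q; simp
    | succ n ih =>
      intro q
      rw [Function.iterate_succ_apply', Function.iterate_succ_apply', hFcoe, ih]
  refine ⟨(p : ℝ), p.2, ?_, ?_, ?_⟩
  · have := congrArg (Subtype.val) hpfix
    rw [hFcoe] at this
    exact this
  · intro a ha hfa
    have : Function.IsFixedPt F ⟨a, ha⟩ := Subtype.ext (by rw [hFcoe]; exact hfa)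
    have := ContractingWith.fixedPoint_unique hcontr this
    exact congrArg Subtype.val this
  · intro x₀ hx₀
    have htend := ContractingWith.tendsto_iterate_fixedPoint hcontr ⟨x₀, hx₀⟩
    have htend2 : Filter.Tendsto (fun n : ℕ => ((F^[n] ⟨x₀, hx₀⟩ : s) : ℝ)) Filter.atTop (nhds (p : ℝ)) :=
      ((continuous_subtype_val.tendsto p).comp htend)
    convert htend2 using 2 with n
    rw [hiter n ⟨x₀, hx₀⟩]
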